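/- For every vector x ∈ ℝ^n, |xᵀ(Π^{1/2} P Π^{-1/2})x| ≤ xᵀx; that is, the Rayleigh quotient of the matrix Π^{1/2} P Π^{-1/2} (and hence of its symmetrization (Π^{1/2}PΠ^{-1/2} + Π^{-1/2}PᵀΠ^{1/2})/2) is bounded in absolute value by 1. -/

import Mathlib

open Matrix Finset Filter Topology

/-- The all-ones n×n matrix `J = e eᵀ`. -/
noncomputable def Jmat (n : ℕ) : Matrix (Fin n) (Fin n) ℝ :=
  Matrix.of fun _ _ => (1 : ℝ)

/-- `Π^{1/2}`: the diagonal matrix with entries `√(π_i)`. -/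
noncomputable def Pih (n : ℕ) (pv : Fin n → ℝ) : Matrix (Fin n) (Fin n) ℝ :=
  Matrix.diagonal fun i => Real.sqrt (pv i)

/-- `Π^{-1/2}`: the diagonal matrix with entries `1/√(π_i)`. -/
noncomputable def Pinvh (n : ℕ) (pv : Fin n → ℝ) : Matrix (Fin n) (Fin n) ℝ :=
  Matrix.diagonal fun i => (Real.sqrt (pv i))⁻¹

lemma abs_mul_le_half (u v : ℝ) : |u * v| ≤ (u ^ 2 + v ^ 2) / 2 := by
  rw [abs_le]
  constructor <;> nlinarith [sq_nonneg (u - v), sq_nonneg (u + v)]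

lemma key_term (p a b x y : ℝ) (hp : 0 ≤ p) (ha : 0 < a) (hb : 0 < b) :
    |x * (Real.sqrt a * p * (Real.sqrt b)⁻¹ * y)| ≤ p * (x ^ 2 + a / b * y ^ 2) / 2 := by
  have hsa := Real.sqrt_pos.mpr ha
  have hsb := Real.sqrt_pos.mpr hb
  have h1 : |x * (Real.sqrt a * p * (Real.sqrt b)⁻¹ * y)|
      = p * |x * (Real.sqrt a / Real.sqrt b * y)| := by
    rw [show x * (Real.sqrt a * p * (Real.sqrt b)⁻¹ * y)
        = p * (x * (Real.sqrt a / Real.sqrt b * y)) by field_simp,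
      abs_mul, abs_of_nonneg hp]
  have hsq : (Real.sqrt a / Real.sqrt b * y) ^ 2 = a / b * y ^ 2 := by
    rw [mul_pow, div_pow, Real.sq_sqrt ha.le, Real.sq_sqrt hb.le]
  have h2 := abs_mul_le_half x (Real.sqrt a / Real.sqrt b * y)
  rw [hsq] at h2
  rw [h1]
  calc p * |x * (Real.sqrt a / Real.sqrt b * y)|
      ≤ p * ((x ^ 2 + a / b * y ^ 2) / 2) := by
        exact mul_le_mul_of_nonneg_left h2 hp
    _ = p * (x ^ 2 + a / b * y ^ 2) / 2 := by ring

/-- the Rayleigh quotient of `Π^{1/2} P Π^{-1/2}` (and hence of its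
symmetrization) is bounded in absolute value by 1. -/
theorem rayleigh_quotient_bounded {n : ℕ} (hn : 1 ≤ n)
    (P : Matrix (Fin n) (Fin n) ℝ)
    (hP_nonneg : ∀ i j, 0 ≤ P i j) (hP_row : ∀ i, ∑ j, P i j = 1)
    (pv : Fin n → ℝ) (hpv_pos : ∀ i, 0 < pv i) (hpv_sum : ∑ i, pv i = 1)
    (hpv_stat : Matrix.vecMul pv P = pv) :
    ∀ x : Fin n → ℝ,
      |x ⬝ᵥ (Pih n pv * P * Pinvh n pv).mulVec x| ≤ x ⬝ᵥ x ∧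
      |x ⬝ᵥ ((1 / 2 : ℝ) •
        (Pih n pv * P * Pinvh n pv + Pinvh n pv * Pᵀ * Pih n pv)).mulVec x| ≤ x ⬝ᵥ x := by
  have hentry : ∀ i j, (Pih n pv * P * Pinvh n pv) i j
      = Real.sqrt (pv i) * P i j * (Real.sqrt (pv j))⁻¹ := by
    intro i j
    simp [Pih, Pinvh, Matrix.mul_diagonal, Matrix.diagonal_mul]
  have main : ∀ x : Fin n → ℝ,
      |x ⬝ᵥ (Pih n pv * P * Pinvh n pv).mulVec x| ≤ x ⬝ᵥ x := by
    intro x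
    have hform : x ⬝ᵥ (Pih n pv * P * Pinvh n pv).mulVec x
        = ∑ i, ∑ j, x i * (Real.sqrt (pv i) * P i j * (Real.sqrt (pv j))⁻¹ * x j) := by
      simp only [dotProduct, Matrix.mulVec, dotProduct, hentry, Finset.mul_sum]
    rw [hform]
    calc |∑ i, ∑ j, x i * (Real.sqrt (pv i) * P i j * (Real.sqrt (pv j))⁻¹ * x j)|
        ≤ ∑ i, ∑ j, |x i * (Real.sqrt (pv i) * P i j * (Real.sqrt (pv j))⁻¹ * x j)| := by
          refine (Finset.abs_sum_le_sum_abs _ _).trans ?_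
          exact Finset.sum_le_sum fun i _ => Finset.abs_sum_le_sum_abs _ _
      _ ≤ ∑ i, ∑ j, P i j * (x i ^ 2 + pv i / pv j * x j ^ 2) / 2 := by
          refine Finset.sum_le_sum fun i _ => Finset.sum_le_sum fun j _ => ?_
          have h := key_term (P i j) (pv i) (pv j) (x i) (x j)
            (hP_nonneg i j) (hpv_pos i) (hpv_pos j)
          exact h
      _ = (∑ i, ∑ j, P i j * x i ^ 2 / 2) + ∑ i, ∑ j, P i j * (pv i / pv j) * x j ^ 2 / 2 := by
          rw [← Finset.sum_add_distrib]
          refine Finset.sum_congr rfl fun i _ => ?_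
          rw [← Finset.sum_add_distrib]
          exact Finset.sum_congr rfl fun j _ => by ring
      _ = x ⬝ᵥ x := by
          have hA : (∑ i, ∑ j, P i j * x i ^ 2 / 2) = ∑ i, x i ^ 2 / 2 := by
            refine Finset.sum_congr rfl fun i _ => ?_
            rw [show (∑ j, P i j * x i ^ 2 / 2) = (∑ j, P i j) * (x i ^ 2 / 2) by
              rw [Finset.sum_mul]; exact Finset.sum_congr rfl fun j _ => by ring,
              hP_row i, one_mul]
          have hB : (∑ i, ∑ j, P i j * (pv i / pv j) * x j ^ 2 / 2) = ∑ j, x j ^ 2 / 2 := by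
            rw [Finset.sum_comm]
            refine Finset.sum_congr rfl fun j _ => ?_
            have hs : (∑ i, pv i * P i j) = pv j := by
              have := congrFun hpv_stat j
              simpa [Matrix.vecMul, dotProduct] using this
            have : (∑ i, P i j * (pv i / pv j) * x j ^ 2 / 2)
                = (∑ i, pv i * P i j) * (x j ^ 2 / (2 * pv j)) := by
              rw [Finset.sum_mul]
              refine Finset.sum_congr rfl fun i _ => ?_
              field_simp
            rw [this, hs]
            have hne : pv j ≠ 0 := (hpv_pos j).ne'
            field_simp
          rw [hA, hB, dotProduct, ← Finset.sum_add_distrib]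
          exact Finset.sum_congr rfl fun i _ => by ring
  intro x
  refine ⟨main x, ?_⟩
  have hT : (Pinvh n pv * Pᵀ * Pih n pv) = (Pih n pv * P * Pinvh n pv)ᵀ := by
    simp [Pih, Pinvh, Matrix.transpose_mul, Matrix.diagonal_transpose, Matrix.mul_assoc]
  have hxT : x ⬝ᵥ (Pih n pv * P * Pinvh n pv)ᵀ.mulVec x
      = x ⬝ᵥ (Pih n pv * P * Pinvh n pv).mulVec x := by
    rw [Matrix.dotProduct_mulVec, Matrix.vecMul_transpose, dotProduct_comm]
  have : x ⬝ᵥ ((1 / 2 : ℝ) •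
        (Pih n pv * P * Pinvh n pv + Pinvh n pv * Pᵀ * Pih n pv)).mulVec x
      = x ⬝ᵥ (Pih n pv * P * Pinvh n pv).mulVec x := by
    rw [hT]
    rw [Matrix.smul_mulVec, Matrix.add_mulVec, dotProduct_smul, dotProduct_add, hxT]
    rw [smul_eq_mul]
    ring
  rw [this]
  exact main x
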